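/- arXiv:math/0405448 — 3 statements merged into one kernel-verified Lean document; each statement's English description precedes it below -/
import Mathlib

section
/- Let d ≥ 2, let P ⊆ ℝ^d be a canonical Fano polytope, and let B be a subset of the boundary lattice points of P such that for all distinct x, y ∈ B lying in a common facet of P, the segment [x, y] contains exactly the two lattice points x and y. Let s denote the number of centrally symmetric pairs {x, −x} contained in B. Then |B| ≤ 2^{d+1} − 2 and s ≥ |B| + 1 − 2^d. -/
open scoped BigOperators

noncomputable section

/-- The standard dot product on `ℝ^d`. -/
def dotProd {d : ℕ} (x y : Fin d → ℝ) : ℝ := ∑ i, x i * y i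

/-- A point of `ℝ^d` is a lattice point (element of `ℤ^d`) if all coordinates are integers. -/
def IsLatticePoint {d : ℕ} (x : Fin d → ℝ) : Prop := ∀ i, ∃ n : ℤ, x i = (n : ℝ)

/-- A lattice polytope is the convex hull of finitely many lattice points. -/
def IsLatticePolytope {d : ℕ} (P : Set (Fin d → ℝ)) : Prop :=
  ∃ V : Finset (Fin d → ℝ), (∀ v ∈ V, IsLatticePoint v) ∧ P = convexHull ℝ (V : Set (Fin d → ℝ))

/-- The dual polytope `P* = {y | ⟨x,y⟩ ≥ -1 ∀ x ∈ P}`. -/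
def dualPolytope {d : ℕ} (P : Set (Fin d → ℝ)) : Set (Fin d → ℝ) :=
  {y | ∀ x ∈ P, -1 ≤ dotProd x y}

/-- A reflexive polytope: a full-dimensional lattice polytope with `0` in its interior whose
dual polytope is again a lattice polytope. -/
def IsReflexive {d : ℕ} (P : Set (Fin d → ℝ)) : Prop :=
  IsLatticePolytope P ∧ (0 : Fin d → ℝ) ∈ interior P ∧ IsLatticePolytope (dualPolytope P)

/-- A face of `P`: the subset of `P` where some linear functional attains its maximum bound. -/
def IsFace {d : ℕ} (P F : Set (Fin d → ℝ)) : Prop :=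
  ∃ (u : Fin d → ℝ) (c : ℝ), (∀ x ∈ P, dotProd u x ≤ c) ∧ F = {x ∈ P | dotProd u x = c}

/-- A facet of a `d`-dimensional polytope: a nonempty face of dimension `d - 1`. -/
def IsFacet {d : ℕ} (P F : Set (Fin d → ℝ)) : Prop :=
  IsFace P F ∧ F.Nonempty ∧ Module.finrank ℝ (vectorSpan ℝ F) = d - 1

/-- `x ∼ y` : `x` and `y` lie in a common facet of `P`. -/
def SameFacet {d : ℕ} (P : Set (Fin d → ℝ)) (x y : Fin d → ℝ) : Prop :=
  ∃ F, IsFacet P F ∧ x ∈ F ∧ y ∈ F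

/-- The star set of `x`: the union of all facets of `P` containing `x`. -/
def starSet {d : ℕ} (P : Set (Fin d → ℝ)) (x : Fin d → ℝ) : Set (Fin d → ℝ) :=
  {y | SameFacet P x y}

/-- A family of lattice points forming a `ℤ`-basis of the lattice `ℤ^d`. -/
def IsZBasisFamily {d n : ℕ} (s : Fin n → (Fin d → ℝ)) : Prop :=
  LinearIndependent ℝ s ∧ (∀ i, IsLatticePoint (s i)) ∧
    ∀ z : Fin d → ℝ, IsLatticePoint z → ∃ c : Fin n → ℤ, z = ∑ i, (c i : ℝ) • s i

/-- A primitive lattice point: a nonzero lattice point such that no lattice point lies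
strictly between `0` and it. -/
def IsPrimitivePoint {d : ℕ} (x : Fin d → ℝ) : Prop :=
  IsLatticePoint x ∧ x ≠ 0 ∧ ∀ y ∈ openSegment ℝ (0 : Fin d → ℝ) x, ¬ IsLatticePoint y

/-- A Fano polytope: a full-dimensional lattice polytope with `0` in its interior all of whose
vertices are primitive lattice points. -/
def IsFanoPolytope {d : ℕ} (P : Set (Fin d → ℝ)) : Prop :=
  IsLatticePolytope P ∧ (0 : Fin d → ℝ) ∈ interior P ∧
    ∀ v ∈ Set.extremePoints ℝ P, IsPrimitivePoint v

/-- Canonical: the only interior lattice point is the origin. -/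
def IsCanonicalPolytope {d : ℕ} (P : Set (Fin d → ℝ)) : Prop :=
  {x ∈ interior P | IsLatticePoint x} = {0}

/-- Terminal: the only lattice points of `P` are the origin and the vertices. -/
def IsTerminalPolytope {d : ℕ} (P : Set (Fin d → ℝ)) : Prop :=
  {x ∈ P | IsLatticePoint x} = insert (0 : Fin d → ℝ) (Set.extremePoints ℝ P)

/-- Simplicial: every facet has exactly `d` vertices. -/
def IsSimplicial {d : ℕ} (P : Set (Fin d → ℝ)) : Prop :=
  ∀ F, IsFacet P F → (Set.extremePoints ℝ F).ncard = d

/-- Smooth: the vertices of every facet form a `ℤ`-basis of the lattice. -/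
def IsSmoothPolytope {d : ℕ} (P : Set (Fin d → ℝ)) : Prop :=
  ∀ F, IsFacet P F → ∃ s : Fin d → (Fin d → ℝ),
    Set.extremePoints ℝ F = Set.range s ∧ IsZBasisFamily s

/-- Semi-terminal: any two distinct vertices in a common facet are joined by a lattice-point
free segment. -/
def IsSemiTerminal {d : ℕ} (P : Set (Fin d → ℝ)) : Prop :=
  ∀ v ∈ Set.extremePoints ℝ P, ∀ w ∈ Set.extremePoints ℝ P, v ≠ w → SameFacet P v w →
    {x ∈ segment ℝ v w | IsLatticePoint x} = {v, w}

/-- The quotient space `ℝ^d / ℝv`. -/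
abbrev QuotSpace {d : ℕ} (v : Fin d → ℝ) := (Fin d → ℝ) ⧸ (Submodule.span ℝ {v})

/-- The canonical projection `π_v : ℝ^d → ℝ^d/ℝv`. -/
def projAlong {d : ℕ} (v : Fin d → ℝ) : (Fin d → ℝ) →ₗ[ℝ] QuotSpace v :=
  (Submodule.span ℝ {v}).mkQ

/-- The quotient lattice `ℤ^d/ℤv`, regarded as the image of `ℤ^d` in `ℝ^d/ℝv`. -/
def quotLattice {d : ℕ} (v : Fin d → ℝ) : Set (QuotSpace v) :=
  projAlong v '' {x | IsLatticePoint x}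

/-- A primitive point of the quotient lattice `ℤ^d/ℤv`. -/
def QuotPrimitive {d : ℕ} (v : Fin d → ℝ) (q : QuotSpace v) : Prop :=
  q ∈ quotLattice v ∧ q ≠ 0 ∧ ∀ t ∈ openSegment ℝ (0 : QuotSpace v) q, t ∉ quotLattice v

/-- A Fano polytope in the quotient space `ℝ^d/ℝv` with respect to the lattice `ℤ^d/ℤv`. -/
def QuotIsFanoPolytope {d : ℕ} (v : Fin d → ℝ) (Q : Set (QuotSpace v)) : Prop :=
  (∃ V : Finset (QuotSpace v), (∀ q ∈ V, q ∈ quotLattice v) ∧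
      Q = convexHull ℝ (V : Set (QuotSpace v))) ∧
  (0 : QuotSpace v) ∈ interior Q ∧
  ∀ q ∈ Set.extremePoints ℝ Q, QuotPrimitive v q

/-- Unimodular equivalence: a real linear isomorphism mapping lattice onto lattice and one
polytope onto the other. -/
def LatticeEquivTo {d e : ℕ} (P : Set (Fin d → ℝ)) (Q : Set (Fin e → ℝ)) : Prop :=
  ∃ f : (Fin d → ℝ) ≃ₗ[ℝ] (Fin e → ℝ),
    (∀ x, IsLatticePoint x ↔ IsLatticePoint (f x)) ∧ f '' P = Q

/-- The hexagon `Z₂ = conv(±(1,0), ±(0,1), ±(1,1)) ⊆ ℝ²`. -/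
def Z2 : Set (Fin 2 → ℝ) :=
  convexHull ℝ ({![1,0], ![0,1], ![1,1], ![-1,0], ![0,-1], ![-1,-1]} : Set (Fin 2 → ℝ))

/-- The `j`-th coordinate pair of a point of `ℝ^{2m}`. -/
def pairCoords {m : ℕ} (x : Fin (2 * m) → ℝ) (j : Fin m) : Fin 2 → ℝ :=
  fun i => x ⟨2 * (j : ℕ) + (i : ℕ), by have := j.isLt; have := i.isLt; omega⟩

/-- The `m`-fold product `Z₂ × ⋯ × Z₂ ⊆ ℝ^{2m}`. -/
def prodZ2 (m : ℕ) : Set (Fin (2 * m) → ℝ) := {x | ∀ j : Fin m, pairCoords x j ∈ Z2}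

/-- The `j`-th coordinate pair of a point of `ℝ^{2m+1}` (first `2m` coordinates). -/
def pairCoords' {m : ℕ} (x : Fin (2 * m + 1) → ℝ) (j : Fin m) : Fin 2 → ℝ :=
  fun i => x ⟨2 * (j : ℕ) + (i : ℕ), by have := j.isLt; have := i.isLt; omega⟩

/-- The product `[-1,1] × Z₂ × ⋯ × Z₂ ⊆ ℝ^{2m+1}` with `m` hexagon factors. -/
def boxProdZ2 (m : ℕ) : Set (Fin (2 * m + 1) → ℝ) :=
  {x | x ⟨2 * m, by omega⟩ ∈ Set.Icc (-1 : ℝ) 1 ∧ ∀ j : Fin m, pairCoords' x j ∈ Z2}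

namespace MTC
variable {d : ℕ}

def dotLin (u : Fin d → ℝ) : (Fin d → ℝ) →ₗ[ℝ] ℝ where
  toFun x := dotProd u x
  map_add' x y := by
    simp only [dotProd, Pi.add_apply, ← Finset.sum_add_distrib]
    exact Finset.sum_congr rfl fun i _ => by ring
  map_smul' c x := by
    simp only [dotProd, Pi.smul_apply, RingHom.id_apply, smul_eq_mul, Finset.mul_sum]
    exact Finset.sum_congr rfl fun i _ => by ring

lemma dotProd_comm (x y : Fin d → ℝ) : dotProd x y = dotProd y x := by
  unfold dotProd; exact Finset.sum_congr rfl fun i _ => by ring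

lemma dotProd_smul_left (c : ℝ) (u x : Fin d → ℝ) : dotProd (c • u) x = c * dotProd u x := by
  rw [dotProd_comm, dotProd_comm u x]; exact (dotLin x).map_smul c u

lemma dotProd_add_left (u w x : Fin d → ℝ) : dotProd (u + w) x = dotProd u x + dotProd w x := by
  rw [dotProd_comm, dotProd_comm u x, dotProd_comm w x]; exact (dotLin x).map_add u w

lemma dotProd_sub_left (u w x : Fin d → ℝ) : dotProd (u - w) x = dotProd u x - dotProd w x := by
  rw [dotProd_comm, dotProd_comm u x, dotProd_comm w x]; exact (dotLin x).map_sub u w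

lemma dotLin_cont (u : Fin d → ℝ) : Continuous (dotLin u) :=
  (dotLin u).continuous_of_finiteDimensional

lemma clm_eq_dot (f : (Fin d → ℝ) →L[ℝ] ℝ) (x : Fin d → ℝ) :
    f x = dotProd (fun i => f (Pi.single i 1)) x := by
  conv_lhs => rw [← Finset.univ_sum_single x]
  rw [map_sum]
  unfold dotProd
  refine Finset.sum_congr rfl fun i _ => ?_
  have h1 : (Pi.single i (x i) : Fin d → ℝ) = x i • (Pi.single i (1:ℝ) : Fin d → ℝ) := by
    rw [← Pi.single_smul, smul_eq_mul, mul_one]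
  rw [h1, map_smul, smul_eq_mul]; ring

lemma support_at (P : Set (Fin d → ℝ)) (hconv : Convex ℝ P)
    (h0 : (0:Fin d → ℝ) ∈ interior P) {m : Fin d → ℝ} (hm : m ∈ frontier P) :
    ∃ u : Fin d → ℝ, (∀ p ∈ P, dotProd u p ≤ 1) ∧ dotProd u m = 1 := by
  have hmni : m ∉ interior P := fun h => hm.2 h
  obtain ⟨f, hf⟩ := geometric_hahn_banach_open_point (hconv.interior) isOpen_interior hmni
  have hfm : 0 < f m := by simpa using hf 0 h0
  have hle : ∀ p ∈ P, f p ≤ f m := by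
    intro p hp
    by_contra hgt
    push_neg at hgt
    set b : ℝ := (f m + f p) / (2 * f p) with hb
    have hfp : 0 < f p := lt_trans hfm hgt
    have hb0 : 0 < b := by positivity
    have hb1 : b < 1 := by
      rw [hb, div_lt_one (by positivity)]; linarith
    have hmem : (1 - b) • (0 : Fin d → ℝ) + b • p ∈ interior P :=
      hconv.combo_interior_self_mem_interior h0 hp (by linarith) hb0.le (by ring)
    have := hf _ hmem
    rw [smul_zero, zero_add, map_smul, smul_eq_mul] at this
    have : b * f p = (f m + f p) / 2 := by
      rw [hb]; field_simp
    nlinarith [hf _ hmem, this]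
  set g : Fin d → ℝ := fun i => f (Pi.single i 1) with hg
  have hdg : ∀ x, f x = dotProd g x := fun x => clm_eq_dot f x
  refine ⟨(f m)⁻¹ • g, fun p hp => ?_, ?_⟩
  · rw [dotProd_smul_left, ← hdg, inv_mul_le_iff₀ hfm, mul_one]
    exact hle p hp
  · rw [dotProd_smul_left, ← hdg]
    field_simp


lemma exists_orth {S : Submodule ℝ (Fin d → ℝ)} (hS : S ≠ ⊤) :
    ∃ w : Fin d → ℝ, w ≠ 0 ∧ ∀ x ∈ S, dotProd w x = 0 := by
  let e : (Fin d → ℝ) ≃ₗ[ℝ] EuclideanSpace ℝ (Fin d) :=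
    (WithLp.linearEquiv 2 ℝ (Fin d → ℝ)).symm
  set S' : Submodule ℝ (EuclideanSpace ℝ (Fin d)) := S.map (e : (Fin d → ℝ) →ₗ[ℝ] EuclideanSpace ℝ (Fin d)) with hS'def
  have hS' : S' ≠ ⊤ := by
    intro h
    apply hS
    rw [eq_top_iff]
    intro x _
    have hx : e x ∈ S' := h ▸ Submodule.mem_top
    obtain ⟨y, hy, hxy⟩ := hx
    rwa [← e.injective hxy]
  have hbot : S'ᗮ ≠ ⊥ := fun h => hS' (Submodule.orthogonal_eq_bot_iff.mp h)
  obtain ⟨w', hw'S, hw'0⟩ := Submodule.exists_mem_ne_zero_of_ne_bot hbot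
  refine ⟨e.symm w', fun h => hw'0 ?_, fun x hx => ?_⟩
  · have := congrArg e h
    simpa using this
  · have hin := (Submodule.mem_orthogonal _ _).mp hw'S (e x) ⟨x, hx, rfl⟩
    rw [PiLp.inner_apply] at hin
    simp only [RCLike.inner_apply, conj_trivial] at hin
    rw [← hin]
    unfold dotProd
    refine Finset.sum_congr rfl fun i _ => ?_
    have h1 : (e x) i = x i := rfl
    have h2 : (e.symm w') i = w' i := rfl
    rw [h1, h2]

open Finset in
lemma facet_through (hd : 1 ≤ d) (V : Finset (Fin d → ℝ))
    {P : Set (Fin d → ℝ)} (hP : P = convexHull ℝ (V : Set (Fin d → ℝ)))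
    (h0 : (0:Fin d → ℝ) ∈ interior P) {m : Fin d → ℝ} (hm : m ∈ frontier P) :
    ∃ F, IsFacet P F ∧ ∃ u : Fin d → ℝ, (∀ p ∈ P, dotProd u p ≤ 1) ∧ dotProd u m = 1 ∧
      F = {p ∈ P | dotProd u p = 1} := by
  classical
  have hconv : Convex ℝ P := hP ▸ convex_convexHull ℝ _
  -- the ambient space has finrank d
  have hfr : Module.finrank ℝ (Fin d → ℝ) = d := by
    simp [Module.finrank_pi]
  -- a small ball inside P
  obtain ⟨r, hr0, hball⟩ : ∃ r > 0, Metric.ball (0:Fin d → ℝ) r ⊆ P := by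
    obtain ⟨r, hr0, hball⟩ := Metric.mem_nhds_iff.mp (mem_interior_iff_mem_nhds.mp h0)
    exact ⟨r, hr0, hball⟩
  -- halfspace bounds extend from V to P
  have hext : ∀ y : Fin d → ℝ, (∀ v ∈ V, dotProd v y ≤ 1) → ∀ p ∈ P, dotProd p y ≤ 1 := by
    intro y hy p hp
    rw [hP] at hp
    have hcx : Convex ℝ {p : Fin d → ℝ | dotLin y p ≤ 1} :=
      convex_halfSpace_le (dotLin y).isLinear 1
    have : (V : Set (Fin d → ℝ)) ⊆ {p | dotLin y p ≤ 1} := by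
      intro v hv; simpa [dotLin, dotProd_comm] using hy v hv
    have := convexHull_min this hcx hp
    simpa [dotLin, dotProd_comm] using this
  -- the set of normalized supporting functionals through m
  set G : Set (Fin d → ℝ) := {y | (∀ v ∈ V, dotProd v y ≤ 1) ∧ dotProd m y = 1} with hG
  have hGne : G.Nonempty := by
    obtain ⟨u₀, hu₀1, hu₀2⟩ := support_at P hconv h0 hm
    exact ⟨u₀, fun v hv => by
      rw [dotProd_comm]; exact hu₀1 v (hP ▸ subset_convexHull ℝ _ hv),
      by rw [dotProd_comm]; exact hu₀2⟩
  have hGclosed : IsClosed G := by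
    have h1 : IsClosed {y : Fin d → ℝ | ∀ v ∈ V, dotProd v y ≤ 1} := by
      have : {y : Fin d → ℝ | ∀ v ∈ V, dotProd v y ≤ 1} = ⋂ v ∈ V, {y | dotLin v y ≤ 1} := by
        ext y; simp [dotLin]
      rw [this]
      exact isClosed_biInter fun v _ => isClosed_le (dotLin_cont v) continuous_const
    have h2 : IsClosed {y : Fin d → ℝ | dotLin m y = 1} :=
      isClosed_eq (dotLin_cont m) continuous_const
    exact h1.inter h2
  have hGbdd : Bornology.IsBounded G := by
    refine (Metric.isBounded_closedBall (x := (0:Fin d → ℝ)) (r := 2/r)).subset ?_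
    intro y hy
    rw [Metric.mem_closedBall, dist_zero_right]
    refine pi_norm_le_iff_of_nonneg (by positivity) |>.mpr fun i => ?_
    have hcoord : ∀ c : ℝ, |c| < r → c * y i ≤ 1 := by
      intro c hc
      have hmem : (c • (Pi.single i (1:ℝ) : Fin d → ℝ)) ∈ P := by
        apply hball
        rw [Metric.mem_ball, dist_zero_right]
        refine lt_of_le_of_lt (pi_norm_le_iff_of_nonneg (abs_nonneg c) |>.mpr fun j => ?_) hc
        simp only [Pi.smul_apply, smul_eq_mul, Real.norm_eq_abs]
        rcases eq_or_ne j i with rfl | hne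
        · simp
        · simp [Pi.single_eq_of_ne hne]
      have := hext y hy.1 _ hmem
      have hps : dotProd (Pi.single i 1 : Fin d → ℝ) y = y i := by
        unfold dotProd
        rw [Finset.sum_eq_single i] <;> simp +contextual [Pi.single_eq_of_ne]
      rwa [dotProd_smul_left, hps] at this
    have h1 := hcoord (r/2) (by rw [abs_of_pos (by positivity)]; linarith)
    have h2 := hcoord (-(r/2)) (by rw [abs_neg, abs_of_pos (by positivity)]; linarith)
    rw [Real.norm_eq_abs, abs_le]
    constructor
    · have : (-2)/r ≤ y i := by rw [div_le_iff₀ hr0]; nlinarith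
      linarith [this, (neg_div r 2).symm]
    · rw [le_div_iff₀ hr0]; nlinarith
  have hGcomp : IsCompact G := Metric.isCompact_of_isClosed_isBounded hGclosed hGbdd
  obtain ⟨u, hu⟩ := hGcomp.extremePoints_nonempty hGne
  have huG : u ∈ G := hu.1
  have hule : ∀ p ∈ P, dotProd u p ≤ 1 := fun p hp => by
    rw [dotProd_comm]; exact hext u huG.1 p hp
  have hum : dotProd u m = 1 := by rw [dotProd_comm]; exact huG.2
  have hPc : IsCompact P := hP ▸ V.finite_toSet.isCompact_convexHull ℝ
  have hmP : m ∈ P := by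
    have := hm.1
    rwa [hPc.isClosed.closure_eq] at this
  set F : Set (Fin d → ℝ) := {p ∈ P | dotProd u p = 1} with hF
  have hmF : m ∈ F := ⟨hmP, hum⟩
  set V_F : Finset (Fin d → ℝ) := V.filter (fun v => dotProd u v = 1) with hVF
  have hVFsubF : (V_F : Set (Fin d → ℝ)) ⊆ F := by
    intro v hv
    have hv' := Finset.mem_filter.mp hv
    exact ⟨hP ▸ subset_convexHull ℝ _ hv'.1, hv'.2⟩
  have hFsub : F ⊆ convexHull ℝ (V_F : Set (Fin d → ℝ)) := by
    intro p hpF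
    obtain ⟨hpP, hp1⟩ := hpF
    have hpV : p ∈ convexHull ℝ (V : Set (Fin d → ℝ)) := hP ▸ hpP
    rw [Finset.convexHull_eq] at hpV
    obtain ⟨wt, hwt0, hwt1, hwtc⟩ := hpV
    have hrep : ∑ v ∈ V, wt v • v = p := by
      rw [← hwtc, Finset.centerMass_eq_of_sum_1 _ id hwt1]
      simp
    have hdot : ∑ v ∈ V, wt v * dotProd u v = 1 := by
      have h := congrArg (dotLin u) hrep
      rw [map_sum] at h
      simp only [map_smul, smul_eq_mul] at h
      exact h.trans hp1
    have hterm : ∀ v ∈ V, wt v * (1 - dotProd u v) = 0 := by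
      have hnn : ∀ v ∈ V, 0 ≤ wt v * (1 - dotProd u v) := fun v hv =>
        mul_nonneg (hwt0 v hv)
          (sub_nonneg.mpr (hule v (hP ▸ subset_convexHull ℝ _ hv)))
      have hzz : ∑ v ∈ V, wt v * (1 - dotProd u v) = 0 := by
        have : ∑ v ∈ V, wt v * (1 - dotProd u v)
            = (∑ v ∈ V, wt v) - ∑ v ∈ V, wt v * dotProd u v := by
          rw [← Finset.sum_sub_distrib]
          exact Finset.sum_congr rfl fun v _ => by ring
        rw [this, hwt1, hdot, sub_self]
      exact (Finset.sum_eq_zero_iff_of_nonneg hnn).mp hzz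
    have hsupp : ∀ v ∈ V, wt v ≠ 0 → dotProd u v = 1 := by
      intro v hv hwv
      have := hterm v hv
      rcases mul_eq_zero.mp this with h | h
      · exact absurd h hwv
      · linarith [sub_eq_zero.mp h]
    have hs1 : ∑ v ∈ V_F, wt v = 1 := by
      rw [hVF, Finset.sum_filter_of_ne (fun v hv hne => hsupp v hv hne)]
      exact hwt1
    have hs2 : ∑ v ∈ V_F, wt v • v = p := by
      rw [hVF, Finset.sum_filter_of_ne (fun v hv hne => hsupp v hv ?_)]
      · exact hrep
      · intro h; apply hne; rw [h, zero_smul]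
    rw [Finset.convexHull_eq]
    exact ⟨wt, fun v hv => hwt0 v (Finset.mem_filter.mp hv).1, hs1,
      by rw [Finset.centerMass_eq_of_sum_1 _ id hs1]; simpa using hs2⟩
  have hVFne : V_F.Nonempty := by
    rw [Finset.nonempty_iff_ne_empty]
    intro h
    have := hFsub hmF
    rw [h] at this
    simp at this
  -- upper bound on the dimension
  have hker : Module.finrank ℝ (LinearMap.ker (dotLin u)) = d - 1 := by
    have hsur : Function.Surjective (dotLin u) := by
      intro c
      refine ⟨c • m, ?_⟩
      rw [map_smul, smul_eq_mul]
      show c * dotProd u m = c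
      rw [hum, mul_one]
    have := LinearMap.finrank_range_add_finrank_ker (dotLin u)
    rw [LinearMap.range_eq_top.mpr hsur, finrank_top, Module.finrank_self, hfr] at this
    omega
  have hub : Module.finrank ℝ (vectorSpan ℝ F) ≤ d - 1 := by
    have hle : vectorSpan ℝ F ≤ LinearMap.ker (dotLin u) := by
      rw [vectorSpan_def, Submodule.span_le]
      rintro z ⟨p, hp, q, hq, rfl⟩
      have hv : dotLin u (p -ᵥ q) = dotProd u p - dotProd u q := by
        show dotLin u (p - q) = _
        rw [map_sub]; rfl
      rw [SetLike.mem_coe, LinearMap.mem_ker, hv, hp.2, hq.2, sub_self]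
    calc Module.finrank ℝ (vectorSpan ℝ F) ≤ _ := Submodule.finrank_mono hle
    _ = d - 1 := hker
  -- lower bound
  have hlb : d - 1 ≤ Module.finrank ℝ (vectorSpan ℝ F) := by
    by_contra hlt
    push_neg at hlt
    obtain ⟨v₀, hv₀⟩ := hVFne
    have hv₀ne : v₀ ≠ 0 := by
      intro h
      have := (Finset.mem_filter.mp hv₀).2
      rw [h] at this
      simp [dotProd] at this
    set S : Submodule ℝ (Fin d → ℝ) := Submodule.span ℝ (V_F : Set (Fin d → ℝ)) with hS
    have hSle : S ≤ (ℝ ∙ v₀) ⊔ vectorSpan ℝ (V_F : Set (Fin d → ℝ)) := by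
      rw [hS, Submodule.span_le]
      intro v hv
      have heq : v = v₀ + (v - v₀) := by abel
      rw [heq]
      exact Submodule.add_mem_sup (Submodule.mem_span_singleton_self v₀)
        (vsub_mem_vectorSpan ℝ hv hv₀)
    have hSfr : Module.finrank ℝ S < d := by
      have h1 : Module.finrank ℝ S
          ≤ Module.finrank ℝ ((ℝ ∙ v₀) ⊔ vectorSpan ℝ (V_F : Set (Fin d → ℝ)) :
              Submodule ℝ (Fin d → ℝ)) := Submodule.finrank_mono hSle
      have h2 := Submodule.finrank_add_le_finrank_add_finrank (ℝ ∙ v₀)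
        (vectorSpan ℝ (V_F : Set (Fin d → ℝ)))
      have h3 : Module.finrank ℝ (ℝ ∙ v₀ : Submodule ℝ (Fin d → ℝ)) = 1 :=
        finrank_span_singleton hv₀ne
      have h4 : Module.finrank ℝ (vectorSpan ℝ (V_F : Set (Fin d → ℝ)))
          ≤ Module.finrank ℝ (vectorSpan ℝ F) :=
        Submodule.finrank_mono (vectorSpan_mono ℝ hVFsubF)
      omega
    have hSne : S ≠ ⊤ := by
      intro h
      rw [h, finrank_top, hfr] at hSfr
      omega
    obtain ⟨w, hw0, hworth⟩ := exists_orth hSne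
    have hWzero : ∀ v ∈ V_F, dotProd w v = 0 := fun v hv =>
      hworth v (Submodule.subset_span hv)
    have hwm : dotProd w m = 0 := by
      apply hworth
      have hsub : convexHull ℝ (V_F : Set (Fin d → ℝ)) ⊆ (S : Set (Fin d → ℝ)) :=
        convexHull_min Submodule.subset_span (S.convex)
      exact hsub (hFsub hmF)
    set V' : Finset (Fin d → ℝ) := V.filter (fun v => dotProd u v ≠ 1) with hV'
    set g : (Fin d → ℝ) → ℝ := fun v => (1 - dotProd u v) / (|dotProd w v| + 1) with hg
    set ε : ℝ := (insert (1:ℝ) (V'.image g)).min' (Finset.insert_nonempty _ _) with hε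
    have hV'lt : ∀ v ∈ V', dotProd u v < 1 := by
      intro v hv
      have hv' := Finset.mem_filter.mp hv
      exact lt_of_le_of_ne (hule v (hP ▸ subset_convexHull ℝ _ hv'.1)) hv'.2
    have hεpos : 0 < ε := by
      rw [hε, Finset.lt_min'_iff]
      intro b hb
      rcases Finset.mem_insert.mp hb with rfl | hb
      · norm_num
      · obtain ⟨v, hv, rfl⟩ := Finset.mem_image.mp hb
        have := hV'lt v hv
        apply div_pos (by linarith) (by positivity)
    have hbound : ∀ v ∈ V', ε * |dotProd w v| ≤ 1 - dotProd u v := by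
      intro v hv
      have hεle : ε ≤ g v := Finset.min'_le _ _
        (Finset.mem_insert_of_mem (Finset.mem_image_of_mem g hv))
      have hd0 : (0:ℝ) < |dotProd w v| + 1 := by positivity
      calc ε * |dotProd w v| ≤ ε * (|dotProd w v| + 1) := by nlinarith
        _ ≤ g v * (|dotProd w v| + 1) := by nlinarith
        _ = 1 - dotProd u v := by rw [hg]; field_simp
    have hmemG : ∀ σ : ℝ, |σ| ≤ ε → u + σ • w ∈ G := by
      intro σ hσ
      constructor
      · intro v hv
        rw [dotProd_comm, dotProd_add_left, dotProd_smul_left]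
        by_cases hv1 : dotProd u v = 1
        · have hvF : v ∈ V_F := Finset.mem_filter.mpr ⟨hv, hv1⟩
          rw [hv1, hWzero v hvF, mul_zero, add_zero]
        · have hvV' : v ∈ V' := Finset.mem_filter.mpr ⟨hv, hv1⟩
          have h1 : σ * dotProd w v ≤ |σ| * |dotProd w v| := by
            rw [← abs_mul]; exact le_abs_self _
          have h2 : |σ| * |dotProd w v| ≤ ε * |dotProd w v| :=
            mul_le_mul_of_nonneg_right hσ (abs_nonneg _)
          have h3 := hbound v hvV'
          linarith
      · rw [dotProd_comm, dotProd_add_left, dotProd_smul_left, hum, hwm,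
          mul_zero, add_zero]
    have h1G : u + ε • w ∈ G := hmemG ε (by rw [abs_of_pos hεpos])
    have h2G : u - ε • w ∈ G := by
      have := hmemG (-ε) (by rw [abs_neg, abs_of_pos hεpos])
      rwa [neg_smul, ← sub_eq_add_neg] at this
    have hop : u ∈ openSegment ℝ (u + ε • w) (u - ε • w) := by
      refine ⟨1/2, 1/2, by norm_num, by norm_num, by norm_num, ?_⟩
      module
    have hA := hu.2 h1G h2G hop
    apply hw0
    have : ε • w = 0 := by
      have := congrArg (fun z => z - u) hA
      simpa [add_sub_cancel_left] using this
    exact (smul_eq_zero.mp this).resolve_left (ne_of_gt hεpos)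
  refine ⟨F, ⟨⟨u, 1, hule, hF⟩, ⟨m, hmF⟩, le_antisymm hub hlb⟩, u, hule, hum, hF⟩

def mod2 {d : ℕ} (x : Fin d → ℝ) : Fin d → ZMod 2 := fun i => ((⌊x i⌋ : ℤ) : ZMod 2)

lemma floor_eq_of_lattice {x : Fin d → ℝ} (hx : IsLatticePoint x) (i : Fin d) :
    ((⌊x i⌋ : ℤ) : ℝ) = x i := by
  obtain ⟨n, hn⟩ := hx i
  rw [hn, Int.floor_intCast]

lemma mod2_zero : mod2 (0 : Fin d → ℝ) = 0 := by
  funext i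
  simp [mod2]

lemma mod2_neg {x : Fin d → ℝ} (hx : IsLatticePoint x) : mod2 (-x) = mod2 x := by
  funext i
  obtain ⟨n, hn⟩ := hx i
  have h1 : (-x) i = ((-n : ℤ) : ℝ) := by simp [hn]
  simp only [mod2, h1, hn, Int.floor_intCast]
  push_cast
  exact CharTwo.neg_eq _

lemma midpoint_lattice {x y : Fin d → ℝ} (hx : IsLatticePoint x) (hy : IsLatticePoint y)
    (h : mod2 x = mod2 y) : IsLatticePoint ((1/2 : ℝ) • (x + y)) := by
  intro i
  obtain ⟨a, ha⟩ := hx i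
  obtain ⟨b, hb⟩ := hy i
  have h2 : ((⌊x i⌋ : ℤ) : ZMod 2) = ((⌊y i⌋ : ℤ) : ZMod 2) := congrFun h i
  rw [ha, Int.floor_intCast, hb, Int.floor_intCast] at h2
  rw [ZMod.intCast_eq_intCast_iff] at h2
  obtain ⟨k, hk⟩ := Int.ModEq.dvd h2
  refine ⟨a + k, ?_⟩
  have hco : ((1/2 : ℝ) • (x + y)) i = (x i + y i) / 2 := by
    simp [Pi.smul_apply]; ring
  rw [hco, ha, hb]
  have hba : (b : ℝ) - a = 2 * k := by exact_mod_cast congrArg (Int.cast : ℤ → ℝ) hk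
  push_cast
  linarith

lemma lattice_finite {P : Set (Fin d → ℝ)} (hPc : IsCompact P)
    {B : Set (Fin d → ℝ)} (hBP : ∀ x ∈ B, x ∈ P) (hBlat : ∀ x ∈ B, IsLatticePoint x) :
    B.Finite := by
  obtain ⟨R, hR⟩ := (Metric.isBounded_iff_subset_closedBall 0).mp hPc.isBounded
  set fl : (Fin d → ℝ) → (Fin d → ℤ) := fun x i => ⌊x i⌋ with hfl
  have hinj : Set.InjOn fl B := by
    intro x hx y hy hxy
    funext i
    have h1 := floor_eq_of_lattice (hBlat x hx) i
    have h2 := floor_eq_of_lattice (hBlat y hy) i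
    rw [← h1, ← h2]
    exact_mod_cast congrFun hxy i
  have himg : (fl '' B).Finite := by
    refine Set.Finite.subset (Set.Finite.pi (fun i : Fin d =>
      Set.finite_Icc (-⌈R⌉) ⌈R⌉)) ?_
    rintro _ ⟨x, hx, rfl⟩
    intro i _
    have hxP := hR (hBP x hx)
    rw [Metric.mem_closedBall, dist_zero_right] at hxP
    have hxi : |x i| ≤ R := by
      have := norm_le_pi_norm x i
      rw [Real.norm_eq_abs] at this
      linarith
    have hfloor : ((⌊x i⌋ : ℤ) : ℝ) = x i := floor_eq_of_lattice (hBlat x hx) i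
    have h1 : |((⌊x i⌋ : ℤ) : ℝ)| ≤ R := by rw [hfloor]; exact hxi
    have h2 : R ≤ (⌈R⌉ : ℝ) := Int.le_ceil R
    constructor
    · have h3 : -((⌈R⌉ : ℤ) : ℝ) ≤ ((⌊x i⌋ : ℤ) : ℝ) := by
        rw [abs_le] at h1; push_cast; linarith
      exact_mod_cast h3
    · have h3 : ((⌊x i⌋ : ℤ) : ℝ) ≤ ((⌈R⌉ : ℤ) : ℝ) := by
        rw [abs_le] at h1; push_cast; linarith
      exact_mod_cast h3
  exact Set.Finite.of_finite_image himg hinj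

end MTC

/-- Counting modulo 2: if `B` is a set of boundary lattice points of a canonical
Fano polytope such that any two distinct points of `B` in a common facet span a lattice-point
free segment, then `|B| ≤ 2^{d+1} - 2` and the number `s` of centrally symmetric pairs in `B`
satisfies `s ≥ |B| + 1 - 2^d`. -/
theorem mod_two_counting {d : ℕ} (hd : 2 ≤ d) (P : Set (Fin d → ℝ))
    (hFano : IsFanoPolytope P) (hcan : IsCanonicalPolytope P)
    (B : Set (Fin d → ℝ)) (hB : B ⊆ {x ∈ frontier P | IsLatticePoint x})
    (hseg : ∀ x ∈ B, ∀ y ∈ B, x ≠ y → SameFacet P x y →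
      {z ∈ segment ℝ x y | IsLatticePoint z} = {x, y}) :
    B.ncard ≤ 2 ^ (d + 1) - 2 ∧
    (B.ncard : ℤ) + 1 - 2 ^ d ≤
      ({q : Set (Fin d → ℝ) | ∃ x, x ∈ B ∧ -x ∈ B ∧ q = {x, -x}}.ncard : ℤ) := by
  classical
  obtain ⟨⟨V, hVlat, hPV⟩, h0, hprim⟩ := hFano
  have hconv : Convex ℝ P := hPV ▸ convex_convexHull ℝ _
  have hPc : IsCompact P := hPV ▸ V.finite_toSet.isCompact_convexHull ℝ
  have hPcl : IsClosed P := hPc.isClosed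
  have hBfr : ∀ x ∈ B, x ∈ frontier P := fun x hx => (hB hx).1
  have hBlat : ∀ x ∈ B, IsLatticePoint x := fun x hx => (hB hx).2
  have hBP : ∀ x ∈ B, x ∈ P := fun x hx => by
    have := (hBfr x hx).1
    rwa [hPcl.closure_eq] at this
  have hcan' : ∀ z : Fin d → ℝ, z ∈ interior P → IsLatticePoint z → z = 0 := by
    intro z hz hzl
    have : z ∈ {x ∈ interior P | IsLatticePoint x} := ⟨hz, hzl⟩
    rw [hcan] at this
    exact this
  -- no point of B is ≡ 0 (mod 2)
  have hne0 : ∀ x ∈ B, MTC.mod2 x ≠ 0 := by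
    intro x hx h
    have hlat0 : IsLatticePoint (0 : Fin d → ℝ) := fun i => ⟨0, by simp⟩
    have hhalf : IsLatticePoint ((1/2 : ℝ) • (x + 0)) := by
      refine MTC.midpoint_lattice (hBlat x hx) hlat0 ?_
      rw [MTC.mod2_zero, h]
    rw [add_zero] at hhalf
    have hint : (1/2 : ℝ) • x ∈ interior P := by
      have := hconv.combo_interior_self_mem_interior h0 (hBP x hx)
        (by norm_num : (0:ℝ) < 1/2) (by norm_num : (0:ℝ) ≤ 1/2) (by norm_num)
      rwa [smul_zero, zero_add] at this
    have hx0 : (1/2 : ℝ) • x = 0 := hcan' _ hint hhalf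
    have : x = 0 := by
      rcases smul_eq_zero.mp hx0 with h' | h'
      · norm_num at h'
      · exact h'
    rw [this] at hx
    exact (hBfr 0 hx).2 h0
  -- key dichotomy
  have key : ∀ x ∈ B, ∀ y ∈ B, x ≠ y → MTC.mod2 x = MTC.mod2 y → y = -x := by
    intro x hx y hy hxy hm2
    set m : Fin d → ℝ := (1/2 : ℝ) • (x + y) with hmdef
    have hmlat : IsLatticePoint m := MTC.midpoint_lattice (hBlat x hx) (hBlat y hy) hm2
    have hmseg : m ∈ segment ℝ x y :=
      ⟨1/2, 1/2, by norm_num, by norm_num, by norm_num, by rw [hmdef, smul_add]⟩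
    have hmP : m ∈ P := hconv.segment_subset (hBP x hx) (hBP y hy) hmseg
    by_cases hmint : m ∈ interior P
    · have hm0 : m = 0 := hcan' _ hmint hmlat
      have hxy0 : x + y = 0 := by
        rcases smul_eq_zero.mp (hmdef ▸ hm0) with h' | h'
        · norm_num at h'
        · exact h'
      exact (eq_neg_of_add_eq_zero_right hxy0)
    · have hmfr : m ∈ frontier P := ⟨subset_closure hmP, hmint⟩
      obtain ⟨F, hFfacet, u, hule, hum, hFeq⟩ :=
        MTC.facet_through (by omega : 1 ≤ d) V hPV h0 hmfr
      have hux : dotProd u x ≤ 1 := hule x (hBP x hx)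
      have huy : dotProd u y ≤ 1 := hule y (hBP y hy)
      have hsum : dotProd u x + dotProd u y = 2 := by
        have h := hum
        rw [hmdef] at h
        have h2 : dotProd u ((1/2 : ℝ) • (x + y))
            = (1/2 : ℝ) * (dotProd u x + dotProd u y) := by
          show (MTC.dotLin u) ((1/2 : ℝ) • (x + y)) = _
          rw [map_smul, map_add]
          show (1/2:ℝ) * ((MTC.dotLin u) x + (MTC.dotLin u) y) = _
          rfl
        rw [h2] at h
        linarith
      have huy1 : dotProd u y = 1 := by linarith
      have hux1 : dotProd u x = 1 := by linarith
      have hsf : SameFacet P x y :=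
        ⟨F, hFfacet, hFeq ▸ ⟨hBP x hx, hux1⟩, hFeq ▸ ⟨hBP y hy, huy1⟩⟩
      have hlp := hseg x hx y hy hxy hsf
      have hmmem : m ∈ {z ∈ segment ℝ x y | IsLatticePoint z} := ⟨hmseg, hmlat⟩
      rw [hlp] at hmmem
      exfalso
      simp only [Set.mem_insert_iff, Set.mem_singleton_iff] at hmmem
      rcases hmmem with h' | h'
      · apply hxy
        funext i
        have hc := congrFun h' i
        simp only [hmdef, Pi.smul_apply, Pi.add_apply, smul_eq_mul] at hc
        linarith
      · apply hxy
        funext i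
        have hc := congrFun h' i
        simp only [hmdef, Pi.smul_apply, Pi.add_apply, smul_eq_mul] at hc
        linarith
  -- finiteness and counting
  have hBfin : B.Finite := MTC.lattice_finite hPc hBP hBlat
  set Bf : Finset (Fin d → ℝ) := hBfin.toFinset with hBfdef
  have hBfmem : ∀ {x}, x ∈ Bf ↔ x ∈ B := fun {x} => hBfin.mem_toFinset
  have hBcard : B.ncard = Bf.card := by
    rw [Set.ncard_eq_toFinset_card B hBfin]
  set T : Finset (Fin d → ZMod 2) := Bf.image MTC.mod2 with hTdef
  have hfiber2 : ∀ a, (Bf.filter (fun x => MTC.mod2 x = a)).card ≤ 2 := by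
    intro a
    by_cases hne : (Bf.filter (fun x => MTC.mod2 x = a)).Nonempty
    · obtain ⟨x, hxmem⟩ := hne
      have hx' := Finset.mem_filter.mp hxmem
      have hsub : Bf.filter (fun x => MTC.mod2 x = a) ⊆ {x, -x} := by
        intro z hz
        have hz' := Finset.mem_filter.mp hz
        rcases eq_or_ne z x with rfl | hzx
        · exact Finset.mem_insert_self _ _
        · have hzeq : z = -x := key x (hBfmem.mp hx'.1) z (hBfmem.mp hz'.1)
            (Ne.symm hzx) (by rw [hx'.2, hz'.2])
          rw [hzeq]
          exact Finset.mem_insert_of_mem (Finset.mem_singleton_self _)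
      calc (Bf.filter (fun x => MTC.mod2 x = a)).card ≤ ({x, -x} : Finset _).card :=
            Finset.card_le_card hsub
        _ ≤ 2 := (Finset.card_insert_le _ _).trans (by simp)
    · rw [Finset.not_nonempty_iff_eq_empty.mp hne]
      simp
  have hTcard : T.card ≤ 2 ^ d - 1 := by
    have hTsub : T ⊆ Finset.univ.erase 0 := by
      intro a ha
      obtain ⟨x, hx, rfl⟩ := Finset.mem_image.mp ha
      exact Finset.mem_erase.mpr ⟨hne0 x (hBfmem.mp hx), Finset.mem_univ _⟩
    calc T.card ≤ (Finset.univ.erase (0 : Fin d → ZMod 2)).card := Finset.card_le_card hTsub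
      _ = Fintype.card (Fin d → ZMod 2) - 1 := by
          rw [Finset.card_erase_of_mem (Finset.mem_univ _), Finset.card_univ]
      _ = 2 ^ d - 1 := by
          rw [Fintype.card_fun]
          simp
  have hsumfib : Bf.card = ∑ a ∈ T, (Bf.filter (fun x => MTC.mod2 x = a)).card :=
    Finset.card_eq_sum_card_fiberwise (fun x hx => Finset.mem_image_of_mem _ hx)
  set T2 : Finset (Fin d → ZMod 2) :=
    T.filter (fun a => 2 ≤ (Bf.filter (fun x => MTC.mod2 x = a)).card) with hT2def
  have hsplit : Bf.card ≤ T.card + T2.card := by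
    have hle1 : ∀ a ∈ T, (Bf.filter (fun x => MTC.mod2 x = a)).card
        ≤ 1 + (if 2 ≤ (Bf.filter (fun x => MTC.mod2 x = a)).card then 1 else 0) := by
      intro a ha
      have := hfiber2 a
      split <;> omega
    calc Bf.card = ∑ a ∈ T, (Bf.filter (fun x => MTC.mod2 x = a)).card := hsumfib
      _ ≤ ∑ a ∈ T, (1 + (if 2 ≤ (Bf.filter (fun x => MTC.mod2 x = a)).card then 1 else 0)) :=
          Finset.sum_le_sum hle1
      _ = T.card + T2.card := by
          rw [Finset.sum_add_distrib, Finset.sum_const, smul_eq_mul, mul_one, ← Finset.card_filter]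
  -- pairs
  set S : Set (Set (Fin d → ℝ)) := {q | ∃ x, x ∈ B ∧ -x ∈ B ∧ q = {x, -x}} with hSdef
  have hSfin : S.Finite := by
    refine Set.Finite.subset (hBfin.image (fun x => ({x, -x} : Set (Fin d → ℝ)))) ?_
    rintro q ⟨x, hx, hnx, rfl⟩
    exact ⟨x, hx, rfl⟩
  have hT2S : T2.card ≤ S.ncard := by
    set Fib : (Fin d → ZMod 2) → Set (Fin d → ℝ) :=
      fun a => {z | z ∈ B ∧ MTC.mod2 z = a} with hFibdef
    have hT2fib : ∀ a ∈ T2, ∃ x, x ∈ B ∧ -x ∈ B ∧ Fib a = {x, -x} := by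
      intro a ha
      have h2le := (Finset.mem_filter.mp ha).2
      have h1lt : 1 < (Bf.filter (fun x => MTC.mod2 x = a)).card := by omega
      obtain ⟨x, hxm, y, hym, hxyne⟩ := Finset.one_lt_card.mp h1lt
      have hx' := Finset.mem_filter.mp hxm
      have hy' := Finset.mem_filter.mp hym
      have hyx : y = -x := key x (hBfmem.mp hx'.1) y (hBfmem.mp hy'.1)
        hxyne (by rw [hx'.2, hy'.2])
      refine ⟨x, hBfmem.mp hx'.1, hyx ▸ hBfmem.mp hy'.1, ?_⟩
      ext z
      constructor
      · rintro ⟨hzB, hza⟩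
        rcases eq_or_ne z x with rfl | hzx
        · exact Set.mem_insert _ _
        · have : z = -x := key x (hBfmem.mp hx'.1) z hzB (Ne.symm hzx) (by rw [hx'.2, hza])
          rw [this]
          exact Set.mem_insert_of_mem _ rfl
      · intro hz
        rcases hz with rfl | hz
        · exact ⟨hBfmem.mp hx'.1, hx'.2⟩
        · rw [Set.mem_singleton_iff] at hz
          rw [hz, ← hyx]
          exact ⟨hBfmem.mp hy'.1, hy'.2⟩
    have hmaps : ∀ a ∈ (T2 : Set (Fin d → ZMod 2)), Fib a ∈ S := by
      intro a ha
      obtain ⟨x, hx, hnx, hfib⟩ := hT2fib a ha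
      exact ⟨x, hx, hnx, hfib⟩
    have hinj : Set.InjOn Fib (T2 : Set (Fin d → ZMod 2)) := by
      intro a ha b hb hab
      obtain ⟨x, hx, hnx, hfib⟩ := hT2fib a ha
      have hxa : x ∈ Fib a := by rw [hfib]; exact Set.mem_insert _ _
      have hxb : x ∈ Fib b := hab ▸ hxa
      have h1 : MTC.mod2 x = a := hxa.2
      have h2 : MTC.mod2 x = b := hxb.2
      rw [← h1, h2]
    calc T2.card = (T2 : Set (Fin d → ZMod 2)).ncard := (Set.ncard_coe_finset _).symm
      _ ≤ S.ncard := Set.ncard_le_ncard_of_injOn Fib hmaps hinj hSfin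
  have h2dpos : 1 ≤ 2 ^ d := Nat.one_le_two_pow
  constructor
  · rw [hBcard]
    have : Bf.card ≤ 2 * T.card := by
      rw [hsumfib]
      calc ∑ a ∈ T, (Bf.filter (fun x => MTC.mod2 x = a)).card ≤ ∑ _a ∈ T, 2 :=
            Finset.sum_le_sum (fun a _ => hfiber2 a)
        _ = 2 * T.card := by rw [Finset.sum_const, smul_eq_mul, mul_comm]
    have hpow : 2 ^ (d + 1) = 2 * 2 ^ d := by rw [pow_succ, mul_comm]
    omega
  · rw [hBcard]
    have hfinal : Bf.card ≤ (2 ^ d - 1) + S.ncard := by omega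
    have hcast : ((2 ^ d : ℕ) : ℤ) = (2 : ℤ) ^ d := by push_cast; ring
    omega

end
end

section
/- Let P ⊆ ℝ^d be a terminal Fano polytope with d ≥ 2. Then the set of boundary lattice points of P equals the vertex set V(P), and |V(P)| ≤ 2^{d+1} − 2. If equality holds, then P is centrally symmetric (P = −P). -/
open scoped BigOperators

noncomputable section

namespace TerminalAux

variable {d : ℕ}

def cls (x : Fin d → ℝ) : Fin d → ZMod 2 := fun i => ((round (x i) : ℤ) : ZMod 2)

lemma lattice_of_cls_eq {v w : Fin d → ℝ} (hv : IsLatticePoint v) (hw : IsLatticePoint w)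
    (h : cls v = cls w) : IsLatticePoint ((1/2 : ℝ) • (v + w)) := by
  intro i
  obtain ⟨n, hn⟩ := hv i
  obtain ⟨m, hm⟩ := hw i
  have h2 : ((n : ZMod 2)) = (m : ZMod 2) := by
    have := congrFun h i
    simpa [cls, hn, hm, round_intCast] using this
  have hdvd : (2 : ℤ) ∣ n + m := by
    have h3 := Int.ModEq.dvd ((ZMod.intCast_eq_intCast_iff _ _ _).mp h2)
    omega
  obtain ⟨k, hk⟩ := hdvd
  refine ⟨k, ?_⟩
  have hc : (n : ℝ) + m = 2 * (k : ℝ) := by exact_mod_cast hk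
  simp only [Pi.smul_apply, Pi.add_apply, hn, hm, smul_eq_mul]
  linarith

lemma cls_ne_zero {v : Fin d → ℝ} (hv : IsPrimitivePoint v) : cls v ≠ 0 := by
  intro h0
  have hhalf : IsLatticePoint ((1/2 : ℝ) • v) := by
    intro i
    obtain ⟨n, hn⟩ := hv.1 i
    have hz : ((n : ZMod 2)) = 0 := by
      simpa [cls, hn, round_intCast] using congrFun h0 i
    have h2 : (2 : ℤ) ∣ n := by
      have := (ZMod.intCast_zmod_eq_zero_iff_dvd n 2).mp hz
      exact_mod_cast this
    obtain ⟨k, hk⟩ := h2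
    refine ⟨k, ?_⟩
    have hc : (n : ℝ) = 2 * (k : ℝ) := by exact_mod_cast hk
    simp only [Pi.smul_apply, hn, smul_eq_mul]
    linarith
  have hmem : (1/2 : ℝ) • v ∈ openSegment ℝ (0 : Fin d → ℝ) v :=
    ⟨1/2, 1/2, by norm_num, by norm_num, by norm_num, by simp⟩
  exact hv.2.2 _ hmem hhalf

lemma extreme_not_interior {P : Set (Fin d → ℝ)} (hd : 0 < d)
    {v : Fin d → ℝ} (hv : v ∈ Set.extremePoints ℝ P) : v ∉ interior P := by
  intro hint
  obtain ⟨ε, hε, hball⟩ := Metric.mem_nhds_iff.mp (mem_interior_iff_mem_nhds.mp hint)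
  set e : Fin d → ℝ := Pi.single ⟨0, hd⟩ 1 with he
  have hnorm : ‖e‖ = 1 := by rw [he, Pi.norm_single]; simp
  have h1 : v + (ε/2) • e ∈ P := by
    apply hball
    rw [Metric.mem_ball, dist_eq_norm, add_sub_cancel_left, norm_smul, hnorm,
      Real.norm_eq_abs]
    rw [mul_one, abs_of_pos (by linarith)]
    linarith
  have h2 : v - (ε/2) • e ∈ P := by
    apply hball
    rw [Metric.mem_ball, dist_eq_norm, sub_sub_cancel_left, norm_neg, norm_smul, hnorm,
      Real.norm_eq_abs]
    rw [mul_one, abs_of_pos (by linarith)]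
    linarith
  have hseg : v ∈ openSegment ℝ (v + (ε/2) • e) (v - (ε/2) • e) :=
    ⟨1/2, 1/2, by norm_num, by norm_num, by norm_num, by module⟩
  have hkey := hv.2 h1 h2 hseg
  have he0 : (ε/2) • e = 0 := by
    have h' : v + (ε/2) • e = v + 0 := by rw [add_zero]; exact hkey
    exact add_left_cancel h'
  rcases smul_eq_zero.mp he0 with h | h
  · linarith
  · have h1' : e ⟨0, hd⟩ = 1 := Pi.single_eq_same _ _
    rw [h] at h1'
    simp at h1'

end TerminalAux

/-- For a terminal Fano polytope `P ⊆ ℝ^d`, `d ≥ 2`, the boundary lattice points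
are exactly the vertices, there are at most `2^{d+1} - 2` of them, and in case of equality `P`
is centrally symmetric. -/
theorem terminal_vertex_bound {d : ℕ} (hd : 2 ≤ d) (P : Set (Fin d → ℝ))
    (hFano : IsFanoPolytope P) (hterm : IsTerminalPolytope P) :
    {x ∈ frontier P | IsLatticePoint x} = Set.extremePoints ℝ P ∧
    (Set.extremePoints ℝ P).ncard ≤ 2 ^ (d + 1) - 2 ∧
    ((Set.extremePoints ℝ P).ncard = 2 ^ (d + 1) - 2 → P = -P) := by
  classical
  obtain ⟨hlatP, h0int, hprim⟩ := hFano
  obtain ⟨V, hVlat, hPV⟩ := hlatP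
  have hconv : Convex ℝ P := hPV ▸ convex_convexHull ℝ _
  have hcomp : IsCompact P := hPV ▸ V.finite_toSet.isCompact_convexHull (𝕜 := ℝ)
  have hclosed : IsClosed P := hcomp.isClosed
  have hextV : Set.extremePoints ℝ P ⊆ ↑V := hPV ▸ extremePoints_convexHull_subset
  have hfin : (Set.extremePoints ℝ P).Finite := V.finite_toSet.subset hextV
  have hlat_ext : ∀ v ∈ Set.extremePoints ℝ P, IsLatticePoint v := fun v hv => (hprim v hv).1
  -- two distinct vertices in the same mod-2 class are opposite
  have hpair : ∀ v ∈ Set.extremePoints ℝ P, ∀ w ∈ Set.extremePoints ℝ P, v ≠ w →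
      TerminalAux.cls v = TerminalAux.cls w → w = -v := by
    intro v hv w hw hne hcls
    have hvP : v ∈ P := extremePoints_subset hv
    have hwP : w ∈ P := extremePoints_subset hw
    have hmP : (1/2 : ℝ) • (v + w) ∈ P := by
      have := hconv hvP hwP (by norm_num : (0:ℝ) ≤ 1/2) (by norm_num : (0:ℝ) ≤ 1/2)
        (by norm_num : (1/2 : ℝ) + 1/2 = 1)
      simpa [smul_add] using this
    have hml : IsLatticePoint ((1/2 : ℝ) • (v + w)) :=
      TerminalAux.lattice_of_cls_eq (hlat_ext v hv) (hlat_ext w hw) hcls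
    have hmem : (1/2 : ℝ) • (v + w) ∈ insert (0 : Fin d → ℝ) (Set.extremePoints ℝ P) := by
      rw [← hterm]; exact ⟨hmP, hml⟩
    rw [Set.mem_insert_iff] at hmem
    rcases hmem with h0 | hex
    · have hvw : v + w = 0 := by
        rcases smul_eq_zero.mp h0 with h | h
        · norm_num at h
        · exact h
      exact eq_neg_of_add_eq_zero_left (by rw [add_comm]; exact hvw)
    · have hseg : (1/2 : ℝ) • (v + w) ∈ openSegment ℝ v w :=
        ⟨1/2, 1/2, by norm_num, by norm_num, by norm_num, by module⟩
      have h12 := hex.2 hvP hwP hseg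
      exact absurd (h12.trans (hex.2 hwP hvP (by rw [openSegment_symm]; exact hseg)).symm) hne
  have hcls0 : ∀ v ∈ Set.extremePoints ℝ P, TerminalAux.cls v ≠ 0 :=
    fun v hv => TerminalAux.cls_ne_zero (hprim v hv)
  -- Part 1
  have hpart1 : {x ∈ frontier P | IsLatticePoint x} = Set.extremePoints ℝ P := by
    ext x
    constructor
    · rintro ⟨hxf, hxl⟩
      have hxP : x ∈ P := by
        have h' := hxf.1
        rwa [hclosed.closure_eq] at h'
      have hmem : x ∈ insert (0 : Fin d → ℝ) (Set.extremePoints ℝ P) := by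
        rw [← hterm]; exact ⟨hxP, hxl⟩
      rw [Set.mem_insert_iff] at hmem
      rcases hmem with rfl | h
      · exact absurd h0int hxf.2
      · exact h
    · intro hx
      refine ⟨?_, hlat_ext x hx⟩
      rw [hclosed.frontier_eq]
      exact ⟨extremePoints_subset hx, TerminalAux.extreme_not_interior (by omega) hx⟩
  -- counting setup
  set E : Finset (Fin d → ℝ) := hfin.toFinset with hEdef
  have hEmem : ∀ x, x ∈ E ↔ x ∈ Set.extremePoints ℝ P := fun x => hfin.mem_toFinset
  have hncard : (Set.extremePoints ℝ P).ncard = E.card :=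
    Set.ncard_eq_toFinset_card _ hfin
  have hfiber2 : ∀ c ∈ E.image TerminalAux.cls,
      (E.filter fun x => TerminalAux.cls x = c).card ≤ 2 := by
    intro c hc
    obtain ⟨v, hvE, rfl⟩ := Finset.mem_image.mp hc
    have hsub : (E.filter fun x => TerminalAux.cls x = TerminalAux.cls v)
        ⊆ {v, -v} := by
      intro w hw
      rw [Finset.mem_filter] at hw
      by_cases hwv : w = v
      · simp [hwv]
      · have := hpair v ((hEmem v).mp hvE) w ((hEmem w).mp hw.1) (Ne.symm hwv) hw.2.symm
        simp [this]
    calc (E.filter fun x => TerminalAux.cls x = TerminalAux.cls v).card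
        ≤ ({v, -v} : Finset _).card := Finset.card_le_card hsub
      _ ≤ 2 := (Finset.card_insert_le _ _).trans (by simp)
  have himg : (E.image TerminalAux.cls).card ≤ 2 ^ d - 1 := by
    have hsub : E.image TerminalAux.cls ⊆ Finset.univ.erase 0 := by
      intro c hc
      obtain ⟨v, hvE, rfl⟩ := Finset.mem_image.mp hc
      exact Finset.mem_erase.mpr ⟨hcls0 v ((hEmem v).mp hvE), Finset.mem_univ _⟩
    calc (E.image TerminalAux.cls).card
        ≤ (Finset.univ.erase (0 : Fin d → ZMod 2)).card := Finset.card_le_card hsub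
      _ = Fintype.card (Fin d → ZMod 2) - 1 := by
          rw [Finset.card_erase_of_mem (Finset.mem_univ _), Finset.card_univ]
      _ = 2 ^ d - 1 := by rw [Fintype.card_fun]; simp
  have hsum : E.card = ∑ c ∈ E.image TerminalAux.cls,
      (E.filter fun x => TerminalAux.cls x = c).card :=
    Finset.card_eq_sum_card_image _ _
  have hEbound : E.card ≤ 2 * (2 ^ d - 1) := by
    rw [hsum]
    calc (∑ c ∈ E.image TerminalAux.cls, (E.filter fun x => TerminalAux.cls x = c).card)
        ≤ ∑ _c ∈ E.image TerminalAux.cls, 2 := Finset.sum_le_sum hfiber2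
      _ = 2 * (E.image TerminalAux.cls).card := by
          rw [Finset.sum_const, smul_eq_mul, mul_comm]
      _ ≤ 2 * (2 ^ d - 1) := by omega
  have h2d : 4 ≤ 2 ^ d := by
    calc (4 : ℕ) = 2 ^ 2 := by norm_num
      _ ≤ 2 ^ d := Nat.pow_le_pow_right (by norm_num) hd
  have hpow : 2 ^ (d + 1) = 2 * 2 ^ d := by rw [pow_succ, mul_comm]
  refine ⟨hpart1, by rw [hncard]; omega, ?_⟩
  -- equality case
  intro hcardeq
  rw [hncard] at hcardeq
  have hsymm : ∀ v ∈ Set.extremePoints ℝ P, -v ∈ Set.extremePoints ℝ P := by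
    intro v hv
    by_contra hnv
    have hvE : v ∈ E := (hEmem v).mpr hv
    have hfv : (E.filter fun x => TerminalAux.cls x = TerminalAux.cls v) = {v} := by
      apply Finset.Subset.antisymm
      · intro w hw
        rw [Finset.mem_filter] at hw
        rw [Finset.mem_singleton]
        by_contra hwv
        have hwneg := hpair v hv w ((hEmem w).mp hw.1) (Ne.symm hwv) hw.2.symm
        exact hnv (hwneg ▸ (hEmem w).mp hw.1)
      · intro w hw
        rw [Finset.mem_singleton] at hw
        subst hw
        exact Finset.mem_filter.mpr ⟨hvE, rfl⟩
    have hcv : TerminalAux.cls v ∈ E.image TerminalAux.cls :=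
      Finset.mem_image_of_mem _ hvE
    have hsum2 := Finset.add_sum_erase _
      (fun c => (E.filter fun x => TerminalAux.cls x = c).card) hcv
    have herase : ((E.image TerminalAux.cls).erase (TerminalAux.cls v)).card
        = (E.image TerminalAux.cls).card - 1 := Finset.card_erase_of_mem hcv
    have hrest : (∑ c ∈ (E.image TerminalAux.cls).erase (TerminalAux.cls v),
        (E.filter fun x => TerminalAux.cls x = c).card)
        ≤ 2 * ((E.image TerminalAux.cls).card - 1) := by
      calc (∑ c ∈ (E.image TerminalAux.cls).erase (TerminalAux.cls v),
          (E.filter fun x => TerminalAux.cls x = c).card)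
          ≤ ∑ _c ∈ (E.image TerminalAux.cls).erase (TerminalAux.cls v), 2 :=
            Finset.sum_le_sum (fun c hc => hfiber2 c (Finset.mem_of_mem_erase hc))
        _ = 2 * ((E.image TerminalAux.cls).erase (TerminalAux.cls v)).card := by
            rw [Finset.sum_const, smul_eq_mul, mul_comm]
        _ = 2 * ((E.image TerminalAux.cls).card - 1) := by rw [herase]
    have hEsmall : E.card ≤ 1 + 2 * ((E.image TerminalAux.cls).card - 1) := by
      rw [hsum, ← hsum2]
      show (E.filter fun x => TerminalAux.cls x = TerminalAux.cls v).card +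
        (∑ c ∈ (E.image TerminalAux.cls).erase (TerminalAux.cls v),
          (E.filter fun x => TerminalAux.cls x = c).card) ≤ _
      rw [hfv, Finset.card_singleton]
      exact Nat.add_le_add_left hrest 1
    omega
  have hSneg : -(Set.extremePoints ℝ P) = Set.extremePoints ℝ P := by
    apply Set.Subset.antisymm
    · intro x hx
      rw [Set.mem_neg] at hx
      simpa using hsymm _ hx
    · intro x hx
      rw [Set.mem_neg]
      exact hsymm _ hx
  have hchull : convexHull ℝ (Set.extremePoints ℝ P) = P := by
    have h1 := closure_convexHull_extremePoints hcomp hconv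
    rwa [IsClosed.closure_eq ((hfin.isCompact_convexHull (𝕜 := ℝ)).isClosed)] at h1
  calc P = convexHull ℝ (Set.extremePoints ℝ P) := hchull.symm
    _ = convexHull ℝ (-(Set.extremePoints ℝ P)) := by rw [hSneg]
    _ = -convexHull ℝ (Set.extremePoints ℝ P) := convexHull_neg _
    _ = -P := by rw [hchull]


end
end

section
/- Let P ⊆ ℝ^d be a centrally symmetric canonical Fano polytope. Then the total number of lattice points of P satisfies |P ∩ ℤ^d| ≤ 3^d, and every facet of P contains at most 3^{d−1} lattice points. -/
open scoped BigOperators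

noncomputable section

namespace CSLB

open Classical in
noncomputable def zc {d : ℕ} (x : Fin d → ℝ) (i : Fin d) : ℤ :=
  if h : ∃ n : ℤ, x i = (n : ℝ) then h.choose else 0

lemma zc_spec {d : ℕ} {x : Fin d → ℝ} (hx : IsLatticePoint x) (i : Fin d) :
    ((zc x i : ℤ) : ℝ) = x i := by
  unfold zc
  rw [dif_pos (hx i)]
  exact ((hx i).choose_spec).symm

/-- Two lattice points of `P` congruent mod 3 coincide. -/
lemma key {d : ℕ} {P : Set (Fin d → ℝ)} (hconv : Convex ℝ P)
    (h0 : (0 : Fin d → ℝ) ∈ interior P) (hsym : P = -P)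
    (hcan : IsCanonicalPolytope P) {x y : Fin d → ℝ}
    (hxP : x ∈ P) (hyP : y ∈ P) (hx : IsLatticePoint x) (hy : IsLatticePoint y)
    (hmod : ∀ i, ((zc x i : ZMod 3)) = (zc y i : ZMod 3)) : x = y := by
  have hdvd : ∀ i, (3 : ℤ) ∣ (zc x i - zc y i) := by
    intro i
    have h := (ZMod.intCast_eq_intCast_iff (zc x i) (zc y i) 3).mp (hmod i)
    exact Int.ModEq.dvd h.symm
  set z : Fin d → ℝ := fun i => (((zc x i - zc y i) / 3 : ℤ) : ℝ) with hzdef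
  have hz3 : ∀ i, 3 * z i = x i - y i := by
    intro i
    have h := Int.ediv_mul_cancel (hdvd i)
    have h2 : (((zc x i - zc y i) / 3 : ℤ) : ℝ) * 3 = ((zc x i : ℤ) : ℝ) - ((zc y i : ℤ) : ℝ) := by
      rw [show ((zc x i : ℤ) : ℝ) - ((zc y i : ℤ) : ℝ) = ((zc x i - zc y i : ℤ) : ℝ) by push_cast; ring]
      exact_mod_cast congrArg (fun n : ℤ => (n : ℝ)) h
    rw [zc_spec hx, zc_spec hy] at h2
    simp only [hzdef]
    linarith
  have hmy : -y ∈ P := by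
    rw [hsym]
    exact Set.neg_mem_neg.mpr hyP
  have hm : (1/2 : ℝ) • x + (1/2 : ℝ) • (-y) ∈ P :=
    hconv hxP hmy (by norm_num) (by norm_num) (by norm_num)
  have hzi : z ∈ interior P := by
    have h := hconv.combo_interior_self_mem_interior h0 hm
      (show (0:ℝ) < 1/3 by norm_num) (show (0:ℝ) ≤ 2/3 by norm_num) (by norm_num)
    have heq : (1/3 : ℝ) • (0 : Fin d → ℝ) + (2/3 : ℝ) • ((1/2 : ℝ) • x + (1/2 : ℝ) • (-y)) = z := by
      funext i
      have := hz3 i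
      simp only [Pi.add_apply, Pi.smul_apply, Pi.zero_apply, Pi.neg_apply, smul_eq_mul]
      linarith
    rwa [heq] at h
  have hzl : IsLatticePoint z := fun i => ⟨(zc x i - zc y i) / 3, rfl⟩
  have hz0 : z = 0 := by
    have hmem : z ∈ {x ∈ interior P | IsLatticePoint x} := ⟨hzi, hzl⟩
    rw [hcan] at hmem
    exact hmem
  funext i
  have h1 := hz3 i
  rw [hz0] at h1
  simp only [Pi.zero_apply, mul_zero] at h1
  linarith

/-- ncard bound via an injection into a fintype. -/
lemma ncard_le_of_injOn {α β : Type*} [Fintype β] (s : Set α) (f : α → β)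
    (hf : Set.InjOn f s) : s.ncard ≤ Fintype.card β := by
  rw [← Set.ncard_image_of_injOn hf]
  have h := Set.ncard_le_ncard (Set.subset_univ (f '' s)) Set.finite_univ
  simpa [Set.ncard_univ, Nat.card_eq_fintype_card] using h

/-- From an integer relation vector one can extract one not divisible by 3. -/
lemma reduce3 {d : ℕ} (S : Set (Fin d → ℤ)) (w : Fin d → ℤ) (hw0 : w ≠ 0)
    (hwS : ∀ v ∈ S, ∑ i, w i * v i = 0) :
    ∃ w' : Fin d → ℤ, (¬ ∀ i, (3:ℤ) ∣ w' i) ∧ ∀ v ∈ S, ∑ i, w' i * v i = 0 := by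
  suffices H : ∀ n : ℕ, ∀ w : Fin d → ℤ, (∑ i, (w i).natAbs) = n → w ≠ 0 →
      (∀ v ∈ S, ∑ i, w i * v i = 0) →
      ∃ w' : Fin d → ℤ, (¬ ∀ i, (3:ℤ) ∣ w' i) ∧ ∀ v ∈ S, ∑ i, w' i * v i = 0 by
    exact H _ w rfl hw0 hwS
  intro n
  induction n using Nat.strong_induction_on with
  | _ n ih =>
    intro w hn hw0 hwS
    by_cases h3 : ∀ i, (3:ℤ) ∣ w i
    · set k : Fin d → ℤ := fun i => w i / 3 with hkdef
      have hk : ∀ i, w i = 3 * k i := fun i => (Int.mul_ediv_cancel' (h3 i)).symm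
      obtain ⟨i0, hi0⟩ : ∃ i, w i ≠ 0 := Function.ne_iff.mp hw0
      have hk0 : k ≠ 0 := by
        intro h
        apply hi0
        have := hk i0
        rw [h] at this
        simpa using this
      have hkS : ∀ v ∈ S, ∑ i, k i * v i = 0 := by
        intro v hv
        have h1 := hwS v hv
        have h2 : (3:ℤ) * ∑ i, k i * v i = 0 := by
          rw [Finset.mul_sum, ← h1]
          exact Finset.sum_congr rfl fun i _ => by rw [hk i]; ring
        omega
      have hlt : ∑ i, (k i).natAbs < n := by
        rw [← hn]
        refine Finset.sum_lt_sum (fun i _ => ?_) ⟨i0, Finset.mem_univ _, ?_⟩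
        · have := hk i; omega
        · have := hk i0; omega
      exact ih _ hlt k rfl hk0 hkS
    · exact ⟨w, h3, hwS⟩

end CSLB

namespace CSLB

/-- The real dot-with-`u` functional on `ℚ^d`, as a `ℚ`-linear map into `ℝ`. -/
noncomputable def Lu {d : ℕ} (u : Fin d → ℝ) : (Fin d → ℚ) →ₗ[ℚ] ℝ where
  toFun v := ∑ i, u i * ((v i : ℚ) : ℝ)
  map_add' a b := by
    rw [← Finset.sum_add_distrib]
    refine Finset.sum_congr rfl fun i _ => ?_
    simp only [Pi.add_apply]
    push_cast
    ring
  map_smul' q a := by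
    simp only [Pi.smul_apply, smul_eq_mul, RingHom.id_apply, Rat.smul_def]
    push_cast
    rw [Finset.mul_sum]
    refine Finset.sum_congr rfl fun i _ => ?_
    ring

/-- If all lattice points of `T` lie on the hyperplane `⟨u,·⟩ = c` with `u ≠ 0`, there is an
integer relation vector, not entirely divisible by 3, killing all their differences. -/
lemma exists_w {d : ℕ} (u : Fin d → ℝ) (hu : u ≠ 0) (T : Set (Fin d → ℝ))
    (hT : ∀ x ∈ T, IsLatticePoint x) (c : ℝ) (hTc : ∀ x ∈ T, dotProd u x = c) :
    ∃ w : Fin d → ℤ, (¬ ∀ i, (3:ℤ) ∣ w i) ∧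
      ∀ x ∈ T, ∀ y ∈ T, ∑ i, w i * (zc x i - zc y i) = 0 := by
  classical
  set SZ : Set (Fin d → ℤ) :=
    {v | ∃ x ∈ T, ∃ y ∈ T, v = fun i => zc x i - zc y i} with hSZ
  set SQ : Set (Fin d → ℚ) := (fun (v : Fin d → ℤ) (i : Fin d) => ((v i : ℤ) : ℚ)) '' SZ with hSQ
  -- SQ is killed by the real functional Lu u
  have hker : Submodule.span ℚ SQ ≤ LinearMap.ker (Lu u) := by
    rw [Submodule.span_le]
    rintro _ ⟨v, ⟨x, hxT, y, hyT, rfl⟩, rfl⟩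
    simp only [SetLike.mem_coe, LinearMap.mem_ker]
    show ∑ i, u i * (((zc x i - zc y i : ℤ) : ℚ) : ℝ) = 0
    have h1 : ∀ i, (((zc x i - zc y i : ℤ) : ℚ) : ℝ) = x i - y i := by
      intro i
      push_cast
      rw [zc_spec (hT x hxT), zc_spec (hT y hyT)]
    calc ∑ i, u i * (((zc x i - zc y i : ℤ) : ℚ) : ℝ)
        = ∑ i, (u i * x i - u i * y i) := by
          refine Finset.sum_congr rfl fun i _ => ?_
          rw [h1 i]; ring
      _ = dotProd u x - dotProd u y := by
          rw [dotProd, dotProd, Finset.sum_sub_distrib]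
      _ = 0 := by rw [hTc x hxT, hTc y hyT, sub_self]
  -- the span is proper
  have hne : Submodule.span ℚ SQ ≠ ⊤ := by
    intro htop
    apply hu
    funext i
    have hLzero : Lu u (fun j => if i = j then (1:ℚ) else 0) = 0 := by
      have : (fun j => if i = j then (1:ℚ) else 0) ∈ LinearMap.ker (Lu u) :=
        hker (htop ▸ Submodule.mem_top)
      exact this
    have : Lu u (fun j => if i = j then (1:ℚ) else 0) = u i := by
      show ∑ j, u j * (((if i = j then (1:ℚ) else 0) : ℚ) : ℝ) = u i
      rw [Finset.sum_eq_single i]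
      · simp
      · intro j _ hj
        simp [Ne.symm hj]
      · simp
    rw [hLzero] at this
    simp [← this]
  -- a nonzero rational functional vanishing on SQ
  obtain ⟨f, hf0, hfbot⟩ :=
    Submodule.exists_dual_map_eq_bot_of_lt_top (lt_top_iff_ne_top.mpr hne) inferInstance
  have hfS : ∀ v ∈ SQ, f v = 0 := by
    intro v hv
    have : f v ∈ Submodule.map f (Submodule.span ℚ SQ) :=
      Submodule.mem_map_of_mem (Submodule.subset_span hv)
    rw [hfbot] at this
    exact (Submodule.mem_bot ℚ).mp this
  set q : Fin d → ℚ := fun i => f (fun j => if i = j then (1:ℚ) else 0) with hq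
  have hfq : ∀ v : Fin d → ℚ, f v = ∑ i, v i * q i := by
    intro v
    conv_lhs => rw [pi_eq_sum_univ v]
    rw [map_sum]
    refine Finset.sum_congr rfl fun i _ => ?_
    rw [map_smul, smul_eq_mul, hq]
  have hq0 : ∃ i, q i ≠ 0 := by
    by_contra h
    push_neg at h
    apply hf0
    apply LinearMap.ext
    intro v
    rw [hfq]
    simp [h]
  -- clear denominators
  set N : ℤ := ∏ i, ((q i).den : ℤ) with hN
  have hNpos : 0 < N := by
    rw [hN]
    exact Finset.prod_pos fun i _ => Int.natCast_pos.mpr (q i).den_pos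
  have hcast : ∀ i, ∃ m : ℤ, ((m : ℚ)) = q i * (N : ℚ) := by
    intro i
    have hdvd : ((q i).den : ℤ) ∣ N := Finset.dvd_prod_of_mem _ (Finset.mem_univ i)
    obtain ⟨m, hm⟩ := hdvd
    refine ⟨(q i).num * m, ?_⟩
    have hmQ : (N : ℚ) = ((q i).den : ℚ) * (m : ℚ) := by exact_mod_cast hm
    push_cast
    rw [hmQ, ← Rat.mul_den_eq_num (q i)]
    ring
  choose wq hwq using hcast
  have hwq0 : wq ≠ 0 := by
    obtain ⟨i, hi⟩ := hq0
    intro h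
    have := hwq i
    rw [h] at this
    simp only [Pi.zero_apply, Int.cast_zero] at this
    have hN0 : (N : ℚ) ≠ 0 := by exact_mod_cast hNpos.ne'
    exact hi (by
      rcases mul_eq_zero.mp this.symm with h1 | h1
      · exact h1
      · exact absurd h1 hN0)
  have hwqS : ∀ v ∈ SZ, ∑ i, wq i * v i = 0 := by
    intro v hv
    have hvq : (fun i => ((v i : ℤ) : ℚ)) ∈ SQ := ⟨v, hv, rfl⟩
    have h1 : f (fun i => ((v i : ℤ) : ℚ)) = 0 := hfS _ hvq
    rw [hfq] at h1
    have h2 : (↑(∑ i, wq i * v i) : ℚ) = 0 := by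
      push_cast
      calc ∑ i, (wq i : ℚ) * (v i : ℚ) = ∑ i, (q i * (N:ℚ)) * (v i : ℚ) := by
            refine Finset.sum_congr rfl fun i _ => ?_
            rw [hwq i]
        _ = (N:ℚ) * ∑ i, ((v i : ℚ)) * q i := by
            rw [Finset.mul_sum]
            refine Finset.sum_congr rfl fun i _ => ?_
            ring
        _ = 0 := by rw [h1, mul_zero]
    exact_mod_cast h2
  obtain ⟨w, hw3, hwS⟩ := reduce3 SZ wq hwq0 hwqS
  exact ⟨w, hw3, fun x hx y hy => hwS _ ⟨x, hx, y, hy, rfl⟩⟩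

end CSLB


/-- A centrally symmetric canonical Fano polytope `P ⊆ ℝ^d` has at most `3^d`
lattice points, and every facet of `P` has at most `3^{d-1}` lattice points. -/
theorem centrally_symmetric_lattice_point_bound {d : ℕ} (P : Set (Fin d → ℝ))
    (hFano : IsFanoPolytope P) (hcan : IsCanonicalPolytope P) (hc : P = -P) :
    {x ∈ P | IsLatticePoint x}.ncard ≤ 3 ^ d ∧
    ∀ F, IsFacet P F → {x ∈ F | IsLatticePoint x}.ncard ≤ 3 ^ (d - 1) := by
  classical
  obtain ⟨⟨V, hV, hPeq⟩, h0, -⟩ := hFano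
  have hconv : Convex ℝ P := hPeq ▸ convex_convexHull ℝ _
  constructor
  · -- global bound
    have hinj : Set.InjOn (fun x (i : Fin d) => ((CSLB.zc x i : ℤ) : ZMod 3))
        {x ∈ P | IsLatticePoint x} := by
      rintro x ⟨hxP, hxl⟩ y ⟨hyP, hyl⟩ hxy
      exact CSLB.key hconv h0 hc hcan hxP hyP hxl hyl (fun i => congrFun hxy i)
    have h1 := CSLB.ncard_le_of_injOn _ _ hinj
    calc {x ∈ P | IsLatticePoint x}.ncard ≤ Fintype.card (Fin d → ZMod 3) := h1
      _ = 3 ^ d := by rw [Fintype.card_fun, ZMod.card, Fintype.card_fin]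
  · -- facet bound
    intro F hF
    obtain ⟨⟨u, c, hub, hFeq⟩, hFne, hFdim⟩ := hF
    rcases Nat.eq_zero_or_pos d with hd0 | hd
    · subst hd0
      have hsub : {x ∈ F | IsLatticePoint x} ⊆ {0} := by
        intro x _
        have : x = 0 := by funext i; exact i.elim0
        simp [this]
      have := Set.ncard_le_ncard hsub (Set.finite_singleton 0)
      simpa [Set.ncard_singleton] using this
    · have hu : u ≠ 0 := by
        intro hu0
        subst hu0
        have hdot : ∀ x : Fin d → ℝ, dotProd 0 x = 0 := by
          intro x; simp [dotProd]
        obtain ⟨x0, hx0⟩ := hFne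
        rw [hFeq] at hx0
        have hc0 : c = 0 := by rw [← hx0.2, hdot]
        have hFP : F = P := by
          rw [hFeq, hc0]
          ext x
          simp [hdot]
        have hzeroP : (0 : Fin d → ℝ) ∈ P := interior_subset h0
        have hei : ∀ i : Fin d, (fun j => if i = j then (1:ℝ) else 0) ∈ vectorSpan ℝ P := by
          intro i
          set e : Fin d → ℝ := fun j => if i = j then (1:ℝ) else 0 with he
          have htend : Filter.Tendsto (fun t : ℝ => t • e) (nhds 0) (nhds 0) := by
            have hcont : Continuous fun t : ℝ => t • e := continuous_id.smul continuous_const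
            have h00 : (fun t : ℝ => t • e) 0 = 0 := by simp
            simpa [h00] using hcont.tendsto 0
          have hev : ∀ᶠ t : ℝ in nhds 0, t • e ∈ interior P :=
            htend.eventually (p := fun z => z ∈ interior P) (isOpen_interior.mem_nhds h0)
          have h2 : ∀ᶠ t : ℝ in nhdsWithin (0:ℝ) ({0}ᶜ), t • e ∈ interior P :=
            hev.filter_mono nhdsWithin_le_nhds
          have h3 : ∀ᶠ t : ℝ in nhdsWithin (0:ℝ) ({0}ᶜ), t ∈ ({0}ᶜ : Set ℝ) :=
            self_mem_nhdsWithin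
          obtain ⟨t, htP, ht0m⟩ := (h2.and h3).exists
          have ht0 : t ≠ 0 := ht0m
          have hmem : t • e -ᵥ (0 : Fin d → ℝ) ∈ vectorSpan ℝ P :=
            vsub_mem_vectorSpan ℝ (interior_subset htP) hzeroP
          have heq : e = t⁻¹ • (t • e -ᵥ (0 : Fin d → ℝ)) := by
            rw [vsub_eq_sub, sub_zero, smul_smul, inv_mul_cancel₀ ht0, one_smul]
          rw [heq]
          exact Submodule.smul_mem _ _ hmem
        have htop : vectorSpan ℝ P = ⊤ := by
          rw [eq_top_iff]
          intro x _
          have hx : x = ∑ i, x i • (fun j => if i = j then (1:ℝ) else 0) := pi_eq_sum_univ x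
          rw [hx]
          exact Submodule.sum_mem _ fun i _ => Submodule.smul_mem _ _ (hei i)
        rw [hFP, htop, finrank_top] at hFdim
        rw [Module.finrank_fin_fun] at hFdim
        omega
      have hTl : ∀ x ∈ {x ∈ F | IsLatticePoint x}, IsLatticePoint x := fun x hx => hx.2
      have hTc : ∀ x ∈ {x ∈ F | IsLatticePoint x}, dotProd u x = c := by
        intro x hx
        have h1 := hx.1
        rw [hFeq] at h1
        exact h1.2
      obtain ⟨w, hw3, hwS⟩ := CSLB.exists_w u hu _ hTl c hTc
      push_neg at hw3
      obtain ⟨i0, hi0⟩ := hw3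
      have hwbar : ((w i0 : ℤ) : ZMod 3) ≠ 0 := by
        rw [Ne, ZMod.intCast_zmod_eq_zero_iff_dvd]
        exact_mod_cast hi0
      have hFP : F ⊆ P := by
        rw [hFeq]
        exact fun x hx => hx.1
      have hinj : Set.InjOn
          (fun (x : Fin d → ℝ) (j : {j : Fin d // j ≠ i0}) => ((CSLB.zc x j.1 : ℤ) : ZMod 3))
          {x ∈ F | IsLatticePoint x} := by
        rintro x ⟨hxF, hxl⟩ y ⟨hyF, hyl⟩ hxy
        have hne : ∀ j : Fin d, j ≠ i0 →
            ((CSLB.zc x j : ℤ) : ZMod 3) - ((CSLB.zc y j : ℤ) : ZMod 3) = 0 := by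
          intro j hj
          have := congrFun hxy ⟨j, hj⟩
          simp only at this
          rw [this, sub_self]
        have hsum : ∑ i, ((w i : ℤ) : ZMod 3) *
            (((CSLB.zc x i : ℤ) : ZMod 3) - ((CSLB.zc y i : ℤ) : ZMod 3)) = 0 := by
          have h1 := hwS x ⟨hxF, hxl⟩ y ⟨hyF, hyl⟩
          have h2 : ((∑ i, w i * (CSLB.zc x i - CSLB.zc y i) : ℤ) : ZMod 3) = 0 := by
            rw [h1]; simp
          push_cast at h2
          exact h2
        have hsum2 : ((w i0 : ℤ) : ZMod 3) *
            (((CSLB.zc x i0 : ℤ) : ZMod 3) - ((CSLB.zc y i0 : ℤ) : ZMod 3)) = 0 := by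
          rw [← hsum, eq_comm]
          apply Finset.sum_eq_single i0
          · intro j _ hj
            rw [hne j hj, mul_zero]
          · intro h
            exact absurd (Finset.mem_univ i0) h
        have hzero : ((CSLB.zc x i0 : ℤ) : ZMod 3) - ((CSLB.zc y i0 : ℤ) : ZMod 3) = 0 := by
          rcases mul_eq_zero.mp hsum2 with h | h
          · exact absurd h hwbar
          · exact h
        have hmod : ∀ i, ((CSLB.zc x i : ℤ) : ZMod 3) = ((CSLB.zc y i : ℤ) : ZMod 3) := by
          intro i
          by_cases hii : i = i0
          · subst hii
            exact sub_eq_zero.mp hzero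
          · exact sub_eq_zero.mp (hne i hii)
        exact CSLB.key hconv h0 hc hcan (hFP hxF) (hFP hyF) hxl hyl hmod
      have h1 := CSLB.ncard_le_of_injOn _ _ hinj
      have hcard : Fintype.card ({j : Fin d // j ≠ i0} → ZMod 3) = 3 ^ (d - 1) := by
        rw [Fintype.card_fun, ZMod.card]
        congr 1
        have h2 : Fintype.card {j : Fin d // j ≠ i0} =
            Fintype.card (Fin d) - Fintype.card {j : Fin d // j = i0} :=
          Fintype.card_subtype_compl _
        rw [h2, Fintype.card_subtype_eq, Fintype.card_fin]
      calc {x ∈ F | IsLatticePoint x}.ncard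
          ≤ Fintype.card ({j : Fin d // j ≠ i0} → ZMod 3) := h1
        _ = 3 ^ (d - 1) := hcard

end
end
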